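/- Under the SBM LQ game assumptions (Q symmetric with entries in [0,1] and every community aggregate z̄̄_i = [QΔ_π s̄̄_{η̄}]_i > 0, θ₁ > 0, max_k η_k λ_max(QΔ_π) < 1 for all η ∈ Ξ ⊂ ℝ₊^K), the parameter η̄ is identifiable: ‖η − η̄‖ ≤ (2/(min_i z̄̄_i · √(min_k π_k))) · ‖s̄_η − s̄_{η̄}‖_{L²} for all η ∈ Ξ. -/

import Mathlib

open Matrix

/-- Rayleigh-type bound from an eigenvalue bound, for real symmetric matrices. -/
lemma aux_quad_le {K : ℕ} (A : Matrix (Fin K) (Fin K) ℝ) (hA : A.IsHermitian) (c : ℝ)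
    (h : ∀ (μ : ℝ) (v : Fin K → ℝ), v ≠ 0 → A.mulVec v = μ • v → μ ≤ c) :
    ∀ u : Fin K → ℝ, u ⬝ᵥ A.mulVec u ≤ c * (u ⬝ᵥ u) := by
  intro u
  set B : Matrix (Fin K) (Fin K) ℝ := c • (1 : Matrix (Fin K) (Fin K) ℝ) - A with hBdef
  have hBmul : ∀ w : Fin K → ℝ, B *ᵥ w = c • w - A *ᵥ w := by
    intro w
    rw [hBdef, Matrix.sub_mulVec, Matrix.smul_mulVec, Matrix.one_mulVec]
  have hB : B.IsHermitian := by
    have h1 : ((c • (1 : Matrix (Fin K) (Fin K) ℝ))).IsHermitian := by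
      simp [Matrix.IsHermitian, Matrix.conjTranspose_smul]
    exact h1.sub hA
  have heig : ∀ i, 0 ≤ hB.eigenvalues i := by
    intro i
    have hv := hB.mulVec_eigenvectorBasis i
    have hvne : (⇑(hB.eigenvectorBasis i) : Fin K → ℝ) ≠ 0 := by
      have := hB.eigenvectorBasis.orthonormal.ne_zero i
      intro hcon
      apply this
      ext j
      exact congrFun hcon j
    rw [hBmul] at hv
    have hAv : A *ᵥ ⇑(hB.eigenvectorBasis i)
        = (c - hB.eigenvalues i) • ⇑(hB.eigenvectorBasis i) := by
      rw [sub_smul]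
      linear_combination (norm := module) -hv
    have := h _ _ hvne hAv
    linarith
  have hpsd : B.PosSemidef := (Matrix.IsHermitian.posSemidef_iff_eigenvalues_nonneg hB).mpr (fun i => heig i)
  have h2 := (Matrix.posSemidef_iff_dotProduct_mulVec.mp hpsd).2 u
  have hstar : star u = u := by ext i; simp
  rw [hstar, hBmul, dotProduct_sub, dotProduct_smul] at h2
  have : u ⬝ᵥ A *ᵥ u ≤ c • (u ⬝ᵥ u) := by linarith
  simpa using this

lemma aux_dot_self_nonneg {K : ℕ} (v : Fin K → ℝ) : 0 ≤ v ⬝ᵥ v :=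
  Finset.sum_nonneg fun i _ => mul_self_nonneg _

lemma aux_dot_self_pos {K : ℕ} (v : Fin K → ℝ) (hv : v ≠ 0) : 0 < v ⬝ᵥ v := by
  obtain ⟨i, hi⟩ : ∃ i, v i ≠ 0 := by
    by_contra hcon
    push_neg at hcon
    exact hv (funext hcon)
  exact Finset.sum_pos' (fun j _ => mul_self_nonneg _) ⟨i, Finset.mem_univ i, mul_self_pos.mpr hi⟩

lemma aux_dot_shift {K : ℕ} (S : Matrix (Fin K) (Fin K) ℝ) (hsym : S.IsSymm)
    (v w : Fin K → ℝ) : v ⬝ᵥ S.mulVec w = (S.mulVec v) ⬝ᵥ w := by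
  rw [Matrix.dotProduct_mulVec]
  congr 1
  rw [← Matrix.mulVec_transpose, hsym.eq]

lemma aux_abs_quad {K : ℕ} (S : Matrix (Fin K) (Fin K) ℝ) (hnn : ∀ i j, 0 ≤ S i j) (c : ℝ)
    (hq : ∀ u : Fin K → ℝ, u ⬝ᵥ S.mulVec u ≤ c * (u ⬝ᵥ u)) :
    ∀ u : Fin K → ℝ, |u ⬝ᵥ S.mulVec u| ≤ c * (u ⬝ᵥ u) := by
  intro u
  set w : Fin K → ℝ := fun i => |u i| with hw
  have h1 : |u ⬝ᵥ S.mulVec u| ≤ w ⬝ᵥ S.mulVec w := by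
    unfold dotProduct Matrix.mulVec
    calc |∑ i, u i * ∑ j, S i j * u j| ≤ ∑ i, |u i * ∑ j, S i j * u j| :=
          Finset.abs_sum_le_sum_abs _ _
      _ ≤ ∑ i, w i * ∑ j, S i j * w j := by
          refine Finset.sum_le_sum fun i _ => ?_
          rw [abs_mul]
          refine mul_le_mul_of_nonneg_left ?_ (abs_nonneg _)
          calc |∑ j, S i j * u j| ≤ ∑ j, |S i j * u j| := Finset.abs_sum_le_sum_abs _ _
            _ = ∑ j, S i j * w j := by
                refine Finset.sum_congr rfl fun j _ => ?_
                rw [abs_mul, abs_of_nonneg (hnn i j)]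
      _ = ∑ i, w i * (fun k => ∑ j, S k j * w j) i := rfl
  have h2 : w ⬝ᵥ w = u ⬝ᵥ u := by
    unfold dotProduct
    exact Finset.sum_congr rfl fun i _ => (abs_mul_abs_self _)
  calc |u ⬝ᵥ S.mulVec u| ≤ w ⬝ᵥ S.mulVec w := h1
    _ ≤ c * (w ⬝ᵥ w) := hq w
    _ = c * (u ⬝ᵥ u) := by rw [h2]

lemma aux_isHermitian_of_isSymm {K : ℕ} (S : Matrix (Fin K) (Fin K) ℝ) (hsym : S.IsSymm) :
    S.IsHermitian := by
  ext i j
  simpa using congrFun (congrFun hsym.eq i) j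

lemma aux_S2_bound {K : ℕ} (S : Matrix (Fin K) (Fin K) ℝ) (hsym : S.IsSymm)
    (hnn : ∀ i j, 0 ≤ S i j) (c : ℝ) (hc : 0 ≤ c)
    (heig : ∀ (μ : ℝ) (v : Fin K → ℝ), v ≠ 0 → S.mulVec v = μ • v → μ ≤ c) :
    ∀ u : Fin K → ℝ, (S.mulVec u) ⬝ᵥ (S.mulVec u) ≤ c ^ 2 * (u ⬝ᵥ u) := by
  have hherm : S.IsHermitian := aux_isHermitian_of_isSymm S hsym
  have hq : ∀ u : Fin K → ℝ, u ⬝ᵥ S.mulVec u ≤ c * (u ⬝ᵥ u) := aux_quad_le S hherm c heig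
  have habs := aux_abs_quad S hnn c hq
  -- every real eigenvalue of S * S is at most c ^ 2
  have heig2 : ∀ (μ : ℝ) (v : Fin K → ℝ), v ≠ 0 → (S * S).mulVec v = μ • v → μ ≤ c ^ 2 := by
    intro μ v hv hμv
    have hSS : (S * S).mulVec v = S.mulVec (S.mulVec v) := (Matrix.mulVec_mulVec v S S).symm
    have hvpos : 0 < v ⬝ᵥ v := aux_dot_self_pos v hv
    have hμ0 : 0 ≤ μ := by
      have h1 : v ⬝ᵥ (S * S).mulVec v = (S.mulVec v) ⬝ᵥ (S.mulVec v) := by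
        rw [hSS, aux_dot_shift S hsym]
      have h2 : v ⬝ᵥ (S * S).mulVec v = μ * (v ⬝ᵥ v) := by
        rw [hμv]; simp [dotProduct_smul]
      nlinarith [aux_dot_self_nonneg (S.mulVec v)]
    set r := Real.sqrt μ with hr
    have hr0 : 0 ≤ r := Real.sqrt_nonneg μ
    have hrr : r * r = μ := Real.mul_self_sqrt hμ0
    have hrc : r ≤ c := by
      by_cases hw : S.mulVec v + r • v = 0
      · -- S v = -r v
        have hSv : S.mulVec v = (-r) • v := by
          have := hw
          rw [add_eq_zero_iff_eq_neg] at this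
          rw [this, neg_smul]
        have h3 : v ⬝ᵥ S.mulVec v = -r * (v ⬝ᵥ v) := by
          rw [hSv]; simp [dotProduct_smul]
        have h4 := habs v
        rw [h3, abs_mul, abs_neg] at h4
        have h5 : |(-r : ℝ)| = r := by rw [abs_neg, abs_of_nonneg hr0]
        have h6 : |v ⬝ᵥ v| = v ⬝ᵥ v := abs_of_pos hvpos
        rw [abs_of_nonneg hr0, h6] at h4
        exact le_of_mul_le_mul_right h4 hvpos
      · -- w := S v + r v is an eigenvector of S with eigenvalue r
        have hSw : S.mulVec (S.mulVec v + r • v) = r • (S.mulVec v + r • v) := by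
          rw [Matrix.mulVec_add, Matrix.mulVec_smul, ← hSS, hμv, smul_add, smul_smul, hrr]
          rw [add_comm]
        exact heig r _ hw hSw
    calc μ = r * r := hrr.symm
      _ ≤ c * c := mul_le_mul hrc hrc hr0 hc
      _ = c ^ 2 := (sq c).symm
  have hherm2 : (S * S).IsHermitian := by
    have : (S * S).conjTranspose = S.conjTranspose * S.conjTranspose := by
      rw [Matrix.conjTranspose_mul]
    rw [Matrix.IsHermitian, this, hherm.eq]
  intro u
  have := aux_quad_le (S * S) hherm2 (c ^ 2) heig2 u
  calc (S.mulVec u) ⬝ᵥ (S.mulVec u) = u ⬝ᵥ (S * S).mulVec u := by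
        rw [← Matrix.mulVec_mulVec]
        exact (aux_dot_shift S hsym u (S.mulVec u)).symm
    _ ≤ c ^ 2 * (u ⬝ᵥ u) := this

lemma aux_minkowski {K : ℕ} (a b : Fin K → ℝ) :
    Real.sqrt (∑ i, (a i + b i) ^ 2) ≤
      Real.sqrt (∑ i, a i ^ 2) + Real.sqrt (∑ i, b i ^ 2) := by
  have key : ∀ x : Fin K → ℝ,
      ‖(WithLp.equiv 2 (Fin K → ℝ)).symm x‖ = Real.sqrt (∑ i, x i ^ 2) := by
    intro x
    rw [EuclideanSpace.norm_eq]
    congr 1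
    exact Finset.sum_congr rfl fun i _ => by simp [Real.norm_eq_abs, sq_abs]
  have hadd : (WithLp.equiv 2 (Fin K → ℝ)).symm (a + b)
      = (WithLp.equiv 2 (Fin K → ℝ)).symm a + (WithLp.equiv 2 (Fin K → ℝ)).symm b := rfl
  have := norm_add_le ((WithLp.equiv 2 (Fin K → ℝ)).symm a) ((WithLp.equiv 2 (Fin K → ℝ)).symm b)
  rw [← hadd, key, key, key] at this
  simpa using this

open MeasureTheory

set_option maxHeartbeats 1000000

/-- Identifiability for the SBM LQ graphon game: under positivity of the community
aggregates `z̄̄ = QΔ_π s̄̄_η̄` and the contraction condition, the parameter `η̄` is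
identifiable with constant `2/(min_i z̄̄_i · √(min_k π_k))`. -/
theorem stmt_17 (K : ℕ) [NeZero K]
    (Q : Matrix (Fin K) (Fin K) ℝ) (hQsym : Q.IsSymm)
    (hQrange : ∀ i j, Q i j ∈ Set.Icc (0:ℝ) 1)
    (pi : Fin K → ℝ) (hpi : ∀ k, 0 < pi k) (hpisum : ∑ k, pi k = 1)
    (θ₁ : ℝ) (hθ₁ : 0 < θ₁)
    (Ξ : Set (Fin K → ℝ)) (hΞpos : ∀ η ∈ Ξ, ∀ k, 0 ≤ η k)
    (lamMax : ℝ)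
    (hlam : IsGreatest
      {μ : ℝ | Module.End.HasEigenvalue (Matrix.toLin' (Q * Matrix.diagonal pi)) μ} lamMax)
    (hcontr : ∀ η ∈ Ξ, (⨆ k, η k) * lamMax < 1)
    (ηb : Fin K → ℝ) (hηb : ηb ∈ Ξ)
    -- the communities: a measurable partition of [0,1] with measures π_k
    (C : Fin K → Set ℝ) (hCmeas : ∀ k, MeasurableSet (C k))
    (hCdisj : Pairwise (Function.onFun Disjoint C))
    (hCcover : (⋃ k, C k) = Set.Icc (0:ℝ) 1)
    (hCvol : ∀ k, volume (C k) = ENNReal.ofReal (pi k))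
    -- the piecewise-constant graphon equilibrium with community values s̄̄_η
    (s : (Fin K → ℝ) → ℝ → ℝ)
    (hs : ∀ η ∈ Ξ, ∀ k, ∀ x ∈ C k,
      s η x = (θ₁ • ((1 - Matrix.diagonal η * Q * Matrix.diagonal pi)⁻¹).mulVec 1) k)
    -- the community aggregates, assumed strictly positive
    (zb : Fin K → ℝ)
    (hzb : zb = (Q * Matrix.diagonal pi).mulVec
      (θ₁ • ((1 - Matrix.diagonal ηb * Q * Matrix.diagonal pi)⁻¹).mulVec 1))
    (hzbpos : ∀ i, 0 < zb i) :
    ∀ η ∈ Ξ,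
      Real.sqrt (∑ k, (η k - ηb k) ^ 2) ≤
        (2 / ((⨅ i, zb i) * Real.sqrt (⨅ k, pi k))) *
          Real.sqrt (∫ x in Set.Icc (0:ℝ) 1, (s η x - s ηb x) ^ 2) := by
  classical
  intro η hη
  have hKpos : 0 < K := Nat.pos_of_ne_zero (NeZero.ne K)
  haveI : Nonempty (Fin K) := ⟨⟨0, hKpos⟩⟩
  set A := Q * Matrix.diagonal pi with hAdef
  set p : Fin K → ℝ := fun i => Real.sqrt (pi i) with hpdef
  have hppos : ∀ i, 0 < p i := fun i => Real.sqrt_pos.mpr (hpi i)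
  have hpp : ∀ i, p i * p i = pi i := fun i => Real.mul_self_sqrt (hpi i).le
  set S : Matrix (Fin K) (Fin K) ℝ := Matrix.of (fun i j => p i * Q i j * p j) with hSdef
  have hSapp : ∀ i j, S i j = p i * Q i j * p j := fun i j => rfl
  have hSsym : S.IsSymm := by
    show S.transpose = S
    ext i j
    rw [Matrix.transpose_apply, hSapp, hSapp, hQsym.apply j i]
    ring
  have hSnn : ∀ i j, 0 ≤ S i j := fun i j =>
    mul_nonneg (mul_nonneg (hppos i).le (hQrange i j).1) (hppos j).le
  have hAapp : ∀ i j, A i j = Q i j * pi j := fun i j => Matrix.mul_diagonal pi Q i j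
  have hSmul : ∀ (v : Fin K → ℝ) (i : Fin K),
      S.mulVec (fun j => p j * v j) i = p i * (A.mulVec v i) := by
    intro v i
    show ∑ j, S i j * (p j * v j) = p i * ∑ j, A i j * v j
    rw [Finset.mul_sum]
    refine Finset.sum_congr rfl fun j _ => ?_
    rw [hSapp, hAapp, ← hpp j]
    ring
  -- every real eigenvalue of S is at most lamMax
  have heigS : ∀ (μ : ℝ) (v : Fin K → ℝ), v ≠ 0 → S.mulVec v = μ • v → μ ≤ lamMax := by
    intro μ v hv hev
    set w : Fin K → ℝ := fun j => v j / p j with hw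
    have hvw : ∀ j, v j = p j * w j := fun j => by
      rw [hw, mul_comm]
      exact (div_mul_cancel₀ (v j) (hppos j).ne').symm
    have hwne : w ≠ 0 := by
      intro hcon
      apply hv
      funext j
      rw [hvw j, congrFun hcon j]
      simp
    have hAw : A.mulVec w = μ • w := by
      funext i
      have h1 : S.mulVec (fun j => p j * w j) i = p i * (A.mulVec w i) := hSmul w i
      have h2 : (fun j => p j * w j) = v := funext fun j => (hvw j).symm
      rw [h2, hev] at h1
      have h3 : μ * v i = p i * A.mulVec w i := h1
      have h4 : μ * (p i * w i) = p i * A.mulVec w i := by rw [← hvw i]; exact h3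
      have h5 : p i * (A.mulVec w i) = p i * (μ * w i) := by linarith [h4]
      have := mul_left_cancel₀ (hppos i).ne' h5
      simpa using this
    have hev' : Module.End.HasEigenvalue (Matrix.toLin' A) μ := by
      apply Module.End.hasEigenvalue_of_hasEigenvector (x := w)
      exact ⟨Module.End.mem_eigenspace_iff.mpr (by rw [Matrix.toLin'_apply, hAw]), hwne⟩
    exact hlam.2 hev'
  -- lamMax is nonnegative
  have hlam0 : 0 ≤ lamMax := by
    have hquad := aux_quad_le S (aux_isHermitian_of_isSymm S hSsym) lamMax heigS
      (Pi.single ⟨0, hKpos⟩ 1)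
    set i0 : Fin K := ⟨0, hKpos⟩
    have h1 : (Pi.single i0 (1:ℝ)) ⬝ᵥ S.mulVec (Pi.single i0 1) = S i0 i0 := by
      rw [Matrix.mulVec_single]
      rw [single_dotProduct]
      simp
    have h2 : (Pi.single i0 (1:ℝ)) ⬝ᵥ (Pi.single i0 (1:ℝ)) = 1 := by
      rw [single_dotProduct]
      simp
    rw [h1, h2, mul_one] at hquad
    exact le_trans (hSnn i0 i0) hquad
  have hSop := aux_S2_bound S hSsym hSnn lamMax hlam0 heigS
  -- properties of the sup of η' for η' ∈ Ξ
  have hsup : ∀ η' ∈ Ξ, (∀ k, η' k ≤ ⨆ k, η' k) ∧ 0 ≤ ⨆ k, η' k := by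
    intro η' hη'
    have hbdd : BddAbove (Set.range η') := (Set.finite_range η').bddAbove
    have hle : ∀ k, η' k ≤ ⨆ k, η' k := fun k => le_ciSup hbdd k
    exact ⟨hle, le_trans (hΞpos η' hη' ⟨0, hKpos⟩) (hle ⟨0, hKpos⟩)⟩
  -- invertibility of 1 - Δ_η' Q Δ_π for η' ∈ Ξ
  have hunit : ∀ η' ∈ Ξ, IsUnit (1 - Matrix.diagonal η' * Q * Matrix.diagonal pi).det := by
    intro η' hη'
    rw [isUnit_iff_ne_zero]
    intro hdet0
    obtain ⟨v, hvne, hveq⟩ := (Matrix.exists_mulVec_eq_zero_iff).mpr hdet0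
    have hassoc : Matrix.diagonal η' * Q * Matrix.diagonal pi = Matrix.diagonal η' * A := by
      rw [hAdef, Matrix.mul_assoc]
    have hv : ∀ i, v i = η' i * (A.mulVec v) i := by
      intro i
      have h1 : (1 - Matrix.diagonal η' * A).mulVec v = 0 := by rw [← hassoc]; exact hveq
      have h2 : v - (Matrix.diagonal η' * A).mulVec v = 0 := by
        have h2' := h1
        rw [Matrix.sub_mulVec, Matrix.one_mulVec] at h2'
        exact h2'
      have h3 : (Matrix.diagonal η' * A).mulVec v = fun i => η' i * (A.mulVec v) i := by
        funext i
        rw [← Matrix.mulVec_mulVec, Matrix.mulVec_diagonal]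
      have := congrFun h2 i
      rw [h3] at this
      simpa [sub_eq_zero] using this
    set u : Fin K → ℝ := fun i => p i * v i with hu
    have hune : u ≠ 0 := by
      intro hcon
      apply hvne
      funext i
      have := congrFun hcon i
      simp only [hu] at this
      exact (mul_eq_zero.mp this).resolve_left (hppos i).ne'
    have hueq : ∀ i, u i = η' i * (S.mulVec u) i := by
      intro i
      have h1 : S.mulVec u i = p i * (A.mulVec v i) := hSmul v i
      rw [h1, hu]
      simp only []
      rw [hv i]
      ring
    set σ := ⨆ k, η' k with hσ
    obtain ⟨hσle, hσ0⟩ := hsup η' hη'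
    have hσlam : σ * lamMax < 1 := hcontr η' hη'
    have h1 : u ⬝ᵥ u ≤ σ ^ 2 * ((S.mulVec u) ⬝ᵥ (S.mulVec u)) := by
      show ∑ i, u i * u i ≤ σ ^ 2 * ∑ i, (S.mulVec u) i * (S.mulVec u) i
      rw [Finset.mul_sum]
      refine Finset.sum_le_sum fun i _ => ?_
      rw [hueq i]
      have hηi : 0 ≤ η' i := hΞpos η' hη' i
      have hσ0' : (0:ℝ) ≤ σ := hσ0
      have hb : η' i * η' i ≤ σ * σ := mul_le_mul (hσle i) (hσle i) hηi hσ0'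
      nlinarith [sq_nonneg ((S.mulVec u) i), hb]
    have h2 := hSop u
    have h3 : 0 < u ⬝ᵥ u := aux_dot_self_pos u hune
    have hσ0' : (0:ℝ) ≤ σ := hσ0
    have h4 := mul_le_mul_of_nonneg_left h2 (sq_nonneg σ)
    have h5 : σ * lamMax * (σ * lamMax) < 1 := by nlinarith [mul_nonneg hσ0' hlam0]
    nlinarith
  -- the equilibrium equation
  have hequation : ∀ η' ∈ Ξ, ∀ i,
      (θ₁ • ((1 - Matrix.diagonal η' * Q * Matrix.diagonal pi)⁻¹).mulVec 1) i
        - η' i * (A.mulVec (θ₁ • ((1 - Matrix.diagonal η' * Q * Matrix.diagonal pi)⁻¹).mulVec 1)) i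
        = θ₁ := by
    intro η' hη' i
    set N := 1 - Matrix.diagonal η' * Q * Matrix.diagonal pi with hN
    set x : Fin K → ℝ := θ₁ • (N⁻¹).mulVec 1 with hx
    have hNx : N.mulVec x = θ₁ • (1 : Fin K → ℝ) := by
      rw [hx, Matrix.mulVec_smul, Matrix.mulVec_mulVec, Matrix.mul_nonsing_inv _ (hunit η' hη'),
        Matrix.one_mulVec]
    have hassoc : Matrix.diagonal η' * Q * Matrix.diagonal pi = Matrix.diagonal η' * A := by
      rw [hAdef, Matrix.mul_assoc]
    have h1 : N.mulVec x = x - (Matrix.diagonal η' * A).mulVec x := by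
      rw [hN, hassoc, Matrix.sub_mulVec, Matrix.one_mulVec]
    have hdm : (Matrix.diagonal η' * A).mulVec x i = η' i * (A.mulVec x) i := by
      rw [← Matrix.mulVec_mulVec, Matrix.mulVec_diagonal]
    have h3 := congrFun hNx i
    rw [h1] at h3
    have h4 : x i - (Matrix.diagonal η' * A).mulVec x i = θ₁ * 1 := h3
    rw [hdm] at h4
    simpa using h4
  have heqη := hequation η hη
  have heqηb := hequation ηb hηb
  have hseta := fun k x hx => hs η hη k x hx
  have hsetab := fun k x hx => hs ηb hηb k x hx
  set sη : Fin K → ℝ := θ₁ • ((1 - Matrix.diagonal η * Q * Matrix.diagonal pi)⁻¹).mulVec 1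
    with hsηdef
  set sηb : Fin K → ℝ := θ₁ • ((1 - Matrix.diagonal ηb * Q * Matrix.diagonal pi)⁻¹).mulVec 1
    with hsηbdef
  set d : Fin K → ℝ := fun i => sη i - sηb i with hd
  have hid : ∀ i, (η i - ηb i) * zb i = d i - η i * (A.mulVec d) i := by
    intro i
    have hdsub : d = sη - sηb := funext fun i => rfl
    have hAd : (A.mulVec d) i = (A.mulVec sη) i - (A.mulVec sηb) i := by
      rw [hdsub, Matrix.mulVec_sub]
      rfl
    have hzi : zb i = (A.mulVec sηb) i := by rw [hzb]
    have e1 := heqη i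
    have e2 := heqηb i
    have hdi : d i = sη i - sηb i := rfl
    rw [hdi, hAd, hzi]
    linear_combination e2 - e1
  -- the integral equals the weighted sum of squares
  have hfk : ∀ k, ∀ x ∈ C k, (s η x - s ηb x) ^ 2 = (d k) ^ 2 := by
    intro k x hx
    rw [hseta k x hx, hsetab k x hx]
  have hIntk : ∀ k, IntegrableOn (fun x => (s η x - s ηb x) ^ 2) (C k) volume := by
    intro k
    have hconst : IntegrableOn (fun _ : ℝ => (d k) ^ 2) (C k) volume := by
      rw [MeasureTheory.integrableOn_const_iff]
      right
      rw [hCvol k]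
      exact ENNReal.ofReal_lt_top
    exact hconst.congr_fun (fun x hx => (hfk k x hx).symm) (hCmeas k)
  set P := ∑ k, pi k * d k ^ 2 with hP
  have hint : (∫ x in Set.Icc (0:ℝ) 1, (s η x - s ηb x) ^ 2) = P := by
    rw [← hCcover, MeasureTheory.integral_iUnion_fintype hCmeas hCdisj hIntk, hP]
    refine Finset.sum_congr rfl fun k _ => ?_
    rw [MeasureTheory.setIntegral_congr_fun (hCmeas k) (fun x hx => hfk k x hx)]
    rw [MeasureTheory.setIntegral_const, MeasureTheory.measureReal_def, hCvol k, ENNReal.toReal_ofReal (hpi k).le, smul_eq_mul]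
  -- numeric finale
  set X := ∑ k, (η k - ηb k) ^ 2 with hX
  have hP0 : 0 ≤ P := Finset.sum_nonneg fun k _ => mul_nonneg (hpi k).le (sq_nonneg _)
  obtain ⟨k0, hk0⟩ := Finite.exists_min pi
  have hm_eq : (⨅ k, pi k) = pi k0 :=
    le_antisymm (ciInf_le (Set.finite_range pi).bddBelow k0) (le_ciInf hk0)
  set m := ⨅ k, pi k with hm
  have hm0 : 0 < m := hm_eq ▸ hpi k0
  have hmle : ∀ k, m ≤ pi k := fun k => hm_eq ▸ hk0 k
  obtain ⟨iz, hiz⟩ := Finite.exists_min zb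
  have hz_eq : (⨅ i, zb i) = zb iz :=
    le_antisymm (ciInf_le (Set.finite_range zb).bddBelow iz) (le_ciInf hiz)
  set z := ⨅ i, zb i with hz
  have hz0 : 0 < z := hz_eq ▸ hzbpos iz
  have hzle : ∀ i, z ≤ zb i := fun i => hz_eq ▸ hiz i
  set g : Fin K → ℝ := fun i => η i * (A.mulVec d) i with hg
  have hstep1 : z ^ 2 * X ≤ ∑ i, (d i - g i) ^ 2 := by
    rw [hX, Finset.mul_sum]
    refine Finset.sum_le_sum fun i _ => ?_
    have h1 : z ^ 2 * (η i - ηb i) ^ 2 ≤ (zb i) ^ 2 * (η i - ηb i) ^ 2 := by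
      have h0 : z ^ 2 ≤ zb i ^ 2 := by nlinarith [hzle i, hz0]
      exact mul_le_mul_of_nonneg_right h0 (sq_nonneg _)
    have h2 : (zb i) ^ 2 * (η i - ηb i) ^ 2 = (d i - g i) ^ 2 := by
      have hgi : g i = η i * (A.mulVec d) i := rfl
      calc (zb i) ^ 2 * (η i - ηb i) ^ 2 = ((η i - ηb i) * zb i) ^ 2 := by ring
        _ = (d i - g i) ^ 2 := by rw [hid i, hgi]
    linarith
  have hmink : Real.sqrt (∑ i, (d i - g i) ^ 2)
      ≤ Real.sqrt (∑ i, d i ^ 2) + Real.sqrt (∑ i, g i ^ 2) := by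
    have h := aux_minkowski d (fun i => -(g i))
    simpa [← sub_eq_add_neg, neg_sq] using h
  have hDle : ∑ i, d i ^ 2 ≤ P / m := by
    rw [le_div_iff₀ hm0]
    calc (∑ i, d i ^ 2) * m = ∑ i, m * d i ^ 2 := by
          rw [Finset.sum_mul]
          exact Finset.sum_congr rfl fun i _ => mul_comm _ _
      _ ≤ ∑ i, pi i * d i ^ 2 :=
          Finset.sum_le_sum fun i _ => mul_le_mul_of_nonneg_right (hmle i) (sq_nonneg _)
      _ = P := hP.symm
  obtain ⟨hσle, hσ0⟩ := hsup η hη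
  set σ := ⨆ k, η k with hσ
  have hσ0' : (0:ℝ) ≤ σ := hσ0
  have hσlam : σ * lamMax < 1 := hcontr η hη
  set u : Fin K → ℝ := fun i => p i * d i with hu
  have huu : u ⬝ᵥ u = P := by
    rw [hP]
    show ∑ i, u i * u i = ∑ i, pi i * d i ^ 2
    refine Finset.sum_congr rfl fun i _ => ?_
    have hui : u i = p i * d i := rfl
    rw [hui, ← hpp i]
    ring
  have hSu : ∀ i, (S.mulVec u) i = p i * (A.mulVec d) i := fun i => hSmul d i
  have hGle : ∑ i, g i ^ 2 ≤ P / m := by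
    have h1 : ∀ i, g i ^ 2 ≤ σ ^ 2 / m * ((S.mulVec u) i) ^ 2 := by
      intro i
      have hgi : g i = η i * (A.mulVec d) i := rfl
      have e : ((S.mulVec u) i) ^ 2 = pi i * ((A.mulVec d) i) ^ 2 := by
        rw [hSu i, ← hpp i]
        ring
      rw [hgi, e]
      have hηi := hΞpos η hη i
      have h2 : η i ^ 2 ≤ σ ^ 2 := by nlinarith [hσle i]
      have h3 : 1 ≤ pi i / m := (one_le_div hm0).mpr (hmle i)
      calc (η i * (A.mulVec d) i) ^ 2 = η i ^ 2 * ((A.mulVec d) i) ^ 2 := by ring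
        _ ≤ σ ^ 2 * ((A.mulVec d) i) ^ 2 := mul_le_mul_of_nonneg_right h2 (sq_nonneg _)
        _ ≤ σ ^ 2 * ((A.mulVec d) i) ^ 2 * (pi i / m) :=
            le_mul_of_one_le_right (by positivity) h3
        _ = σ ^ 2 / m * (pi i * ((A.mulVec d) i) ^ 2) := by ring
    have h4 : ∑ i, g i ^ 2 ≤ σ ^ 2 / m * ∑ i, ((S.mulVec u) i) ^ 2 := by
      rw [Finset.mul_sum]
      exact Finset.sum_le_sum fun i _ => h1 i
    have h5 : ∑ i, ((S.mulVec u) i) ^ 2 = (S.mulVec u) ⬝ᵥ (S.mulVec u) :=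
      Finset.sum_congr rfl fun i _ => (sq _)
    have h6 := hSop u
    rw [huu] at h6
    have h7 : (σ * lamMax) ^ 2 ≤ 1 := by nlinarith [mul_nonneg hσ0' hlam0]
    calc ∑ i, g i ^ 2 ≤ σ ^ 2 / m * ((S.mulVec u) ⬝ᵥ (S.mulVec u)) := by rw [← h5]; exact h4
      _ ≤ σ ^ 2 / m * (lamMax ^ 2 * P) := mul_le_mul_of_nonneg_left h6 (by positivity)
      _ = ((σ * lamMax) ^ 2 * P) / m := by ring
      _ ≤ (1 * P) / m := by
          have h8 : (σ * lamMax) ^ 2 * P ≤ 1 * P := mul_le_mul_of_nonneg_right h7 hP0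
          exact (div_le_div_iff_of_pos_right hm0).mpr h8
      _ = P / m := by ring
  have hY : ∑ i, (d i - g i) ^ 2 ≤ 4 * (P / m) := by
    have hs1 : Real.sqrt (∑ i, d i ^ 2) ≤ Real.sqrt (P / m) := Real.sqrt_le_sqrt hDle
    have hs2 : Real.sqrt (∑ i, g i ^ 2) ≤ Real.sqrt (P / m) := Real.sqrt_le_sqrt hGle
    have hs3 : Real.sqrt (∑ i, (d i - g i) ^ 2) ≤ 2 * Real.sqrt (P / m) := by
      calc Real.sqrt (∑ i, (d i - g i) ^ 2)
          ≤ Real.sqrt (∑ i, d i ^ 2) + Real.sqrt (∑ i, g i ^ 2) := hmink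
        _ ≤ 2 * Real.sqrt (P / m) := by linarith
    have h0 : 0 ≤ ∑ i, (d i - g i) ^ 2 := Finset.sum_nonneg fun i _ => sq_nonneg _
    have h4 := mul_self_le_mul_self (Real.sqrt_nonneg (∑ i, (d i - g i) ^ 2)) hs3
    rw [Real.mul_self_sqrt h0] at h4
    have h5 := Real.mul_self_sqrt (show (0:ℝ) ≤ P / m by positivity)
    nlinarith [h4, h5]
  have hfin : z ^ 2 * X ≤ 4 * (P / m) := le_trans hstep1 hY
  rw [hint]
  have hsm : 0 < Real.sqrt m := Real.sqrt_pos.mpr hm0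
  have hzm : 0 < z * Real.sqrt m := mul_pos hz0 hsm
  have hkey : X ≤ (2 / (z * Real.sqrt m)) ^ 2 * P := by
    have h1 : (2 / (z * Real.sqrt m)) ^ 2 = 4 / (z ^ 2 * m) := by
      rw [div_pow, mul_pow, Real.sq_sqrt hm0.le]
      norm_num
    rw [h1, div_mul_eq_mul_div, le_div_iff₀ (by positivity)]
    calc X * (z ^ 2 * m) = (z ^ 2 * X) * m := by ring
      _ ≤ (4 * (P / m)) * m := mul_le_mul_of_nonneg_right hfin hm0.le
      _ = 4 * P := by field_simp
  calc Real.sqrt X ≤ Real.sqrt ((2 / (z * Real.sqrt m)) ^ 2 * P) := Real.sqrt_le_sqrt hkey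
    _ = (2 / (z * Real.sqrt m)) * Real.sqrt P := by
        rw [Real.sqrt_mul (sq_nonneg _), Real.sqrt_sq (by positivity)]
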